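/- Under the MMSB setup, the K×K matrix 𝒟_τ^{1/2}(𝓘,𝓘) V(𝓘,:) is nonsingular and ((𝒟_τ^{1/2}(𝓘,𝓘) V(𝓘,:)) (𝒟_τ^{1/2}(𝓘,𝓘) V(𝓘,:))')^{-1} = Π' 𝒟_τ^{-1} Π. -/

import Mathlib

open Matrix BigOperators

/-- Euclidean norm of the `i`-th row of a matrix. -/
noncomputable def rowNorm {m k : ℕ} (M : Matrix (Fin m) (Fin k) ℝ) (i : Fin m) : ℝ :=
  Real.sqrt (∑ j, (M i j) ^ 2)

/-- identity from the proof of Lemma B.2: the `K×K` matrix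
`𝒟_τ^{1/2}(𝓘,𝓘) V(𝓘,:)` is nonsingular and
`((𝒟_τ^{1/2}(𝓘,𝓘) V(𝓘,:)) (𝒟_τ^{1/2}(𝓘,𝓘) V(𝓘,:))')⁻¹ = Π' 𝒟_τ^{-1} Π`. -/
theorem stmt_12
    {n K : ℕ} (hn : 0 < n) (hK : 0 < K) (hKn : K ≤ n)
    (Pi : Matrix (Fin n) (Fin K) ℝ)
    (hPi_nonneg : ∀ i k, 0 ≤ Pi i k)
    (hPi_rowsum : ∀ i, ∑ k, Pi i k = 1)
    (hPi_rank : Pi.rank = K)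
    (hpure : ∀ k : Fin K, ∃ i : Fin n, ∀ l, Pi i l = if l = k then 1 else 0)
    (Pt : Matrix (Fin K) (Fin K) ℝ)
    (hPt_symm : Pt.IsSymm)
    (hPt_nonneg : ∀ k l, 0 ≤ Pt k l)
    (hPt_rank : Pt.rank = K)
    (hPt_le_one : ∀ k l, Pt k l ≤ 1)
    (hPt_max : ∃ k l, Pt k l = 1)
    (ρ τ : ℝ) (hρ0 : 0 < ρ) (hρ1 : ρ ≤ 1) (hτ : 0 ≤ τ)
    (Om : Matrix (Fin n) (Fin n) ℝ) (hOm : Om = Pi * (ρ • Pt) * Piᵀ)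
    (deg : Fin n → ℝ) (hdeg : ∀ i, deg i = ∑ j, Om i j)
    (hpos : ∀ i, 0 < deg i + τ)
    (Ltau : Matrix (Fin n) (Fin n) ℝ)
    (hLtau : Ltau = Matrix.diagonal (fun i => (Real.sqrt (deg i + τ))⁻¹) * Om *
      Matrix.diagonal (fun i => (Real.sqrt (deg i + τ))⁻¹))
    (Idx : Fin K → Fin n) (hIdx : Pi.submatrix Idx id = 1)
    (V : Matrix (Fin n) (Fin K) ℝ) (e : Fin K → ℝ)
    (hVorth : Vᵀ * V = 1) (he : ∀ k, e k ≠ 0)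
    (hVE : Ltau = V * Matrix.diagonal e * Vᵀ)
    (B : Matrix (Fin K) (Fin K) ℝ)
    (hB : B = Matrix.diagonal (fun k => Real.sqrt (deg (Idx k) + τ)) *
      V.submatrix Idx id) :
    IsUnit B ∧
    (B * Bᵀ)⁻¹ = Piᵀ * Matrix.diagonal (fun i => (deg i + τ)⁻¹) * Pi := by

  -- Abbreviations
  set N : Matrix (Fin n) (Fin n) ℝ :=
    Matrix.diagonal (fun i => (Real.sqrt (deg i + τ))⁻¹) with hN
  set Y : Matrix (Fin n) (Fin K) ℝ := N * Pi with hY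
  have hNt : Nᵀ = N := Matrix.diagonal_transpose _
  have hLY : Ltau = Y * (ρ • Pt) * Yᵀ := by
    rw [hLtau, hOm, hY, Matrix.transpose_mul, hNt]
    simp only [Matrix.mul_assoc]
  set Einv : Matrix (Fin K) (Fin K) ℝ := Matrix.diagonal (fun k => (e k)⁻¹) with hEinv
  have hE1 : Matrix.diagonal e * Einv = 1 := by
    rw [hEinv, Matrix.diagonal_mul_diagonal]
    have : (fun k => e k * (e k)⁻¹) = fun _ : Fin K => (1 : ℝ) :=
      funext fun k => mul_inv_cancel₀ (he k)
    rw [this, Matrix.diagonal_one]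
  set W : Matrix (Fin K) (Fin K) ℝ := (ρ • Pt) * Yᵀ * V * Einv with hW
  have hLV : Ltau * V = V * Matrix.diagonal e := by
    rw [hVE, Matrix.mul_assoc, Matrix.mul_assoc, hVorth, Matrix.mul_one]
  have hV : V = Y * W := by
    have h1 : V = V * Matrix.diagonal e * Einv := by
      rw [Matrix.mul_assoc, hE1, Matrix.mul_one]
    rw [h1, ← hLV, hLY, hW]
    simp only [Matrix.mul_assoc]
  -- the diagonal of square roots times Y restricted to Idx is the identity
  set Ds : Matrix (Fin K) (Fin K) ℝ :=
    Matrix.diagonal (fun k => Real.sqrt (deg (Idx k) + τ)) with hDs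
  have hDsY : Ds * Y.submatrix Idx id = 1 := by
    ext k l
    have hPiIdx : Pi (Idx k) l = (1 : Matrix (Fin K) (Fin K) ℝ) k l := by
      have := congrFun (congrFun hIdx k) l
      simpa [Matrix.submatrix_apply] using this
    have hs : Real.sqrt (deg (Idx k) + τ) ≠ 0 :=
      ne_of_gt (Real.sqrt_pos.mpr (hpos (Idx k)))
    rw [hDs, Matrix.diagonal_mul]
    simp only [Matrix.submatrix_apply, id_eq, hY, hN, Matrix.diagonal_mul]
    rw [← mul_assoc, mul_inv_cancel₀ hs, one_mul, hPiIdx]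
  have hsub : V.submatrix Idx id = Y.submatrix Idx id * W := by
    rw [hV]
    ext k j
    simp [Matrix.mul_apply, Matrix.submatrix_apply]
  have hBW : B = W := by
    rw [hB, hsub, ← Matrix.mul_assoc, hDsY, Matrix.one_mul]
  -- G = Yᵀ Y = Πᵀ 𝒟_τ⁻¹ Π
  set G : Matrix (Fin K) (Fin K) ℝ :=
    Piᵀ * Matrix.diagonal (fun i => (deg i + τ)⁻¹) * Pi with hG
  have hYtY : Yᵀ * Y = G := by
    rw [hG, hY, Matrix.transpose_mul, hNt]
    have hNN : N * N = Matrix.diagonal (fun i => (deg i + τ)⁻¹) := by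
      rw [hN, Matrix.diagonal_mul_diagonal]
      have : (fun i => (Real.sqrt (deg i + τ))⁻¹ * (Real.sqrt (deg i + τ))⁻¹)
          = fun i => (deg i + τ)⁻¹ :=
        funext fun i => by rw [← mul_inv, Real.mul_self_sqrt (hpos i).le]
      rw [this]
    rw [Matrix.mul_assoc, ← Matrix.mul_assoc N N Pi, hNN, ← Matrix.mul_assoc]
  have hBGB : Bᵀ * G * B = 1 := by
    have h0 : (Y * W)ᵀ * (Y * W) = 1 := by rw [← hV]; exact hVorth
    rw [hBW, ← hYtY, ← h0, Matrix.transpose_mul Y W]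
    simp only [Matrix.mul_assoc]
  have hdetB : IsUnit B.det := by
    have hd := congrArg Matrix.det hBGB
    rw [Matrix.det_mul, Matrix.det_mul, Matrix.det_one, Matrix.det_transpose] at hd
    exact IsUnit.of_mul_eq_one (a := B.det) (G.det * B.det) (by rw [← mul_assoc]; exact hd)
  have hUB : IsUnit B := (Matrix.isUnit_iff_isUnit_det B).mpr hdetB
  refine ⟨hUB, ?_⟩
  have hdetBt : IsUnit Bᵀ.det := by rwa [Matrix.det_transpose]
  have key : G = Bᵀ⁻¹ * B⁻¹ := by
    have h2 : Bᵀ⁻¹ * (Bᵀ * G * B) * B⁻¹ = Bᵀ⁻¹ * 1 * B⁻¹ := by rw [hBGB]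
    rw [Matrix.mul_one, ← Matrix.mul_assoc, ← Matrix.mul_assoc,
      Matrix.nonsing_inv_mul Bᵀ hdetBt, Matrix.one_mul, Matrix.mul_assoc,
      Matrix.mul_nonsing_inv B hdetB, Matrix.mul_one] at h2
    exact h2
  rw [Matrix.mul_inv_rev, ← key, hG]
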